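/- For the concrete 3×3 matrix R = [[1,−1,0],[0,1,−1],[0,0,1]], vector p = (0,0,1)', and α = 133, the matrix product R(R(I−pe') + α pe') has eigenvalues −7, 5−√82, and 5+√82; in particular it has a real negative eigenvalue. -/
import Mathlib


open Matrix

/-- For `R = [[1,−1,0],[0,1,−1],[0,0,1]]`, `p = (0,0,1)'`, `α = 133`, the matrix
`R(R(I−pe') + αpe')` has real spectrum `{−7, 5−√82, 5+√82}`; in particular it has a
real negative eigenvalue. -/
theorem concrete_negative_eigenvalue :
    let R : Matrix (Fin 3) (Fin 3) ℝ := !![1, -1, 0; 0, 1, -1; 0, 0, 1]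
    let p : Fin 3 → ℝ := ![0, 0, 1]
    let pe : Matrix (Fin 3) (Fin 3) ℝ := Matrix.vecMulVec p (fun _ => (1:ℝ))
    let M : Matrix (Fin 3) (Fin 3) ℝ :=
      R * (R * ((1:Matrix (Fin 3) (Fin 3) ℝ) - pe) + (133:ℝ) • pe)
    spectrum ℝ M = {-7, 5 - Real.sqrt 82, 5 + Real.sqrt 82} ∧
    ∃ t : ℝ, t < 0 ∧ t ∈ spectrum ℝ M := by
  intro R p pe M
  have hpe : pe = !![0,0,0; 0,0,0; 1,1,1] := by
    ext i j
    fin_cases i <;> fin_cases j <;> simp [pe, p, vecMulVec_apply]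
  have hM : M = !![0,-3,0; -131,-130,-133; 132,132,133] := by
    rw [show M = R * (R * ((1:Matrix (Fin 3) (Fin 3) ℝ) - pe) + (133:ℝ) • pe) from rfl,
      hpe]
    ext i j
    fin_cases i <;> fin_cases j <;>
      simp [R, Matrix.mul_apply, Matrix.vecMul, dotProduct, Fin.sum_univ_three,
        Matrix.one_apply, Matrix.vecHead, Matrix.vecTail] <;> norm_num
  have hs : Real.sqrt 82 ^ 2 = 82 := Real.sq_sqrt (by norm_num)
  have hspec : spectrum ℝ M = {-7, 5 - Real.sqrt 82, 5 + Real.sqrt 82} := by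
    ext μ
    rw [spectrum.mem_iff, Matrix.isUnit_iff_isUnit_det, isUnit_iff_ne_zero, not_not]
    have hdet : (algebraMap ℝ (Matrix (Fin 3) (Fin 3) ℝ) μ - M).det
        = (μ + 7) * ((μ - (5 - Real.sqrt 82)) * (μ - (5 + Real.sqrt 82))) := by
      rw [hM]
      rw [Matrix.det_fin_three]
      simp [Matrix.algebraMap_matrix_apply]
      linear_combination (μ + 7) * hs
    rw [hdet]
    simp only [Set.mem_insert_iff, Set.mem_singleton_iff, mul_eq_zero]
    constructor
    · rintro (h | h | h)
      · left; linarith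
      · right; left; linarith
      · right; right; linarith
    · rintro (h | h | h)
      · exact Or.inl (by linarith)
      · exact Or.inr (Or.inl (by linarith))
      · exact Or.inr (Or.inr (by linarith))
  refine ⟨hspec, -7, by norm_num, ?_⟩
  rw [hspec]; exact Set.mem_insert _ _
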